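/- Suppose X is 2-connected, u is a spectrally extremal vertex of X, and u and v are strongly cospectral with u ≠ v. Then d(u,v) = ε_u, i.e., u and v are at maximal distance from each other. -/

import Mathlib

open Matrix Finset Polynomial

variable {V : Type*}

/-- The eccentricity of a vertex: maximum graph distance to any vertex. -/
noncomputable def ecc [Fintype V] (X : SimpleGraph V) (u : V) : ℕ :=
  Finset.univ.sup fun w => X.dist u w

/-- The standard basis vector of a vertex. -/
def eVec [DecidableEq V] (u : V) : V → ℝ := Pi.single u 1

/-- `SpectralDecomp X d θ E` : `θ 0 > θ 1 > ... > θ d` are the distinct eigenvalues of the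
adjacency matrix of `X` and `E r` is the orthogonal projection onto the `θ r`-eigenspace. -/
structure SpectralDecomp [Fintype V] [DecidableEq V] (X : SimpleGraph V) [DecidableRel X.Adj]
    (d : ℕ) (θ : Fin (d + 1) → ℝ) (E : Fin (d + 1) → Matrix V V ℝ) : Prop where
  decomp : X.adjMatrix ℝ = ∑ r, θ r • E r
  sum_eq_one : ∑ r, E r = 1
  orth : ∀ r s, E r * E s = if r = s then E r else 0
  symm : ∀ r, (E r)ᵀ = E r
  strict_anti : ∀ r s : Fin (d + 1), r < s → θ s < θ r
  proj_ne_zero : ∀ r, E r ≠ 0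

open scoped Classical in
/-- The (index set of the) eigenvalue support of a vertex `u`:
those `r` with `E r * e_u ≠ 0`. -/
noncomputable def suppIdx [Fintype V] [DecidableEq V] {d : ℕ}
    (E : Fin (d + 1) → Matrix V V ℝ) (u : V) : Finset (Fin (d + 1)) :=
  Finset.univ.filter fun r => E r *ᵥ eVec u ≠ 0

/-- The dual degree `d*(u) = |Φ_u| - 1`. -/
noncomputable def dualDeg [Fintype V] [DecidableEq V] {d : ℕ}
    (E : Fin (d + 1) → Matrix V V ℝ) (u : V) : ℕ :=
  (suppIdx E u).card - 1

/-- A vertex is spectrally extremal if its eccentricity equals its dual degree. -/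
noncomputable def SpectrallyExtremal [Fintype V] [DecidableEq V] (X : SimpleGraph V) {d : ℕ}
    (E : Fin (d + 1) → Matrix V V ℝ) (u : V) : Prop :=
  ecc X u = dualDeg E u

/-- Vertices are cospectral if the diagonal entries of all spectral projections agree. -/
def Cospectral [Fintype V] [DecidableEq V] {d : ℕ}
    (E : Fin (d + 1) → Matrix V V ℝ) (u v : V) : Prop :=
  ∀ r, E r u u = E r v v

/-- Vertices are strongly cospectral if `E r e_u = ± E r e_v` for every `r`. -/
def StronglyCospectral [Fintype V] [DecidableEq V] {d : ℕ}
    (E : Fin (d + 1) → Matrix V V ℝ) (u v : V) : Prop :=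
  ∀ r, E r *ᵥ eVec v = E r *ᵥ eVec u ∨ E r *ᵥ eVec v = -(E r *ᵥ eVec u)

/-- `u` and `v` are antipodal vertices: they are cospectral, the distance partition of `u`
coincides with that of `v`, it is pseudo equitable (with respect to a positive Perron
eigenvector), and `{u}`, `{v}` are singleton classes at maximum distance from each other. -/
noncomputable def Antipodal [Fintype V] [DecidableEq V] (X : SimpleGraph V) [DecidableRel X.Adj]
    {d : ℕ} (θ : Fin (d + 1) → ℝ) (E : Fin (d + 1) → Matrix V V ℝ) (u v : V) : Prop :=
  Cospectral E u v ∧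
  -- the two distance partitions have the same classes
  (∀ i : ℕ, i ≤ ecc X u → ∃ j : ℕ, ∀ w, X.dist u w = i ↔ X.dist v w = j) ∧
  (∀ j : ℕ, j ≤ ecc X v → ∃ i : ℕ, ∀ w, X.dist u w = i ↔ X.dist v w = j) ∧
  -- `{u}` and `{v}` are singletons at maximum distance from each other
  X.dist u v = ecc X u ∧ X.dist u v = ecc X v ∧
  (∀ w, X.dist u w = X.dist u v → w = v) ∧
  (∀ w, X.dist v w = X.dist u v → w = u) ∧
  -- the partition is pseudo equitable with respect to a positive eigenvector
  -- for the largest eigenvalue `θ 0`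
  ∃ x : V → ℝ, (∀ w, 0 < x w) ∧ X.adjMatrix ℝ *ᵥ x = θ 0 • x ∧
    ∀ i : ℕ, ∀ w₁ w₂ : V, X.dist u w₁ = X.dist u w₂ →
      ∑ c ∈ Finset.univ.filter (fun c => X.dist u c = i),
          (X.adjMatrix ℝ) w₁ c * x c / x w₁
        = ∑ c ∈ Finset.univ.filter (fun c => X.dist u c = i),
          (X.adjMatrix ℝ) w₂ c * x c / x w₂

/-- Perfect state transfer from `u` to `v` at time `t`:
`|(exp (i t A))_{v,u}| = 1`. -/
noncomputable def PST [Fintype V] [DecidableEq V] (X : SimpleGraph V) [DecidableRel X.Adj]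
    (u v : V) (t : ℝ) : Prop :=
  ‖(NormedSpace.exp ((Complex.I * (t : ℂ)) • X.adjMatrix ℂ)) v u‖ = 1

/-- `X` is distance-regular: there are intersection numbers `a i`, `b i`, `c i` such that
any vertex `w` at distance `i` from `u` has exactly `c i` neighbours at distance `i - 1`
from `u`, `a i` neighbours at distance `i`, and `b i` neighbours at distance `i + 1`. -/
noncomputable def IsDistanceRegular [Fintype V] (X : SimpleGraph V) [DecidableRel X.Adj] :
    Prop :=
  ∃ a b c : ℕ → ℕ, ∀ (i : ℕ) (u w : V), X.dist u w = i →
    (Finset.univ.filter (fun z => X.Adj w z ∧ X.dist u z + 1 = i)).card = c i ∧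
    (Finset.univ.filter (fun z => X.Adj w z ∧ X.dist u z = i)).card = a i ∧
    (Finset.univ.filter (fun z => X.Adj w z ∧ X.dist u z = i + 1)).card = b i

variable [Fintype V] [DecidableEq V]

private lemma sum_mulVec' {ι : Type*} (s : Finset ι) (f : ι → Matrix V V ℝ) (x : V → ℝ) :
    (∑ i ∈ s, f i) *ᵥ x = ∑ i ∈ s, f i *ᵥ x := by
  ext w
  simp only [Matrix.mulVec, dotProduct, Matrix.sum_apply, Finset.sum_apply,
    Finset.sum_mul]
  rw [Finset.sum_comm]

private lemma pow_decomp (X : SimpleGraph V) [DecidableRel X.Adj]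
    {d : ℕ} {θ : Fin (d + 1) → ℝ} {E : Fin (d + 1) → Matrix V V ℝ}
    (hspec : SpectralDecomp X d θ E) (n : ℕ) :
    X.adjMatrix ℝ ^ n = ∑ r, θ r ^ n • E r := by
  induction n with
  | zero => simp [hspec.sum_eq_one]
  | succ n ih =>
    calc X.adjMatrix ℝ ^ (n + 1) = (∑ r, θ r ^ n • E r) * ∑ s, θ s • E s := by
          rw [pow_succ, ih, hspec.decomp]
      _ = ∑ r, ∑ s, (θ r ^ n * θ s) • (E r * E s) := by
          rw [Finset.sum_mul]
          refine Finset.sum_congr rfl fun r _ => ?_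
          rw [Finset.mul_sum]
          refine Finset.sum_congr rfl fun s _ => ?_
          rw [Matrix.smul_mul, Matrix.mul_smul, smul_smul]
      _ = ∑ r, θ r ^ (n + 1) • E r := by
          refine Finset.sum_congr rfl fun r _ => ?_
          rw [Finset.sum_eq_single r]
          · rw [hspec.orth r r, if_pos rfl, pow_succ]
          · intro s _ hs
            rw [hspec.orth r s, if_neg (fun h => hs h.symm), smul_zero]
          · intro h; exact absurd (Finset.mem_univ r) h

private lemma aeval_decomp (X : SimpleGraph V) [DecidableRel X.Adj]
    {d : ℕ} {θ : Fin (d + 1) → ℝ} {E : Fin (d + 1) → Matrix V V ℝ}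
    (hspec : SpectralDecomp X d θ E) (q : ℝ[X]) :
    Polynomial.aeval (X.adjMatrix ℝ) q = ∑ r, q.eval (θ r) • E r := by
  rw [Polynomial.aeval_eq_sum_range]
  calc ∑ i ∈ Finset.range (q.natDegree + 1), q.coeff i • X.adjMatrix ℝ ^ i
      = ∑ i ∈ Finset.range (q.natDegree + 1), ∑ r, (q.coeff i * θ r ^ i) • E r := by
        refine Finset.sum_congr rfl fun i _ => ?_
        rw [pow_decomp X hspec i, Finset.smul_sum]
        simp [smul_smul]
    _ = ∑ r, (∑ i ∈ Finset.range (q.natDegree + 1), q.coeff i * θ r ^ i) • E r := by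
        rw [Finset.sum_comm]
        refine Finset.sum_congr rfl fun r _ => ?_
        rw [Finset.sum_smul]
    _ = ∑ r, q.eval (θ r) • E r := by
        refine Finset.sum_congr rfl fun r _ => ?_
        rw [Polynomial.eval_eq_sum_range]

private lemma ivt_walk (X : SimpleGraph V) (hconn : X.Connected) (u : V) (m : ℕ) :
    ∀ {a b : V} (W : X.Walk a b), X.dist u a ≤ m → m ≤ X.dist u b →
    ∃ w ∈ W.support, X.dist u w = m := by
  intro a b W
  induction W with
  | nil =>
    intro h1 h2
    exact ⟨_, by simp, le_antisymm h1 h2⟩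
  | @cons a c b hadj q ih =>
    intro h1 h2
    by_cases hc : X.dist u c ≤ m
    · obtain ⟨w, hw, hw2⟩ := ih hc h2
      exact ⟨w, by simp [hw], hw2⟩
    · push_neg at hc
      have hac1 : X.dist a c = 1 := SimpleGraph.dist_eq_one_iff_adj.mpr hadj
      have htri : X.dist u c ≤ X.dist u a + X.dist a c := hconn.dist_triangle
      have : X.dist u a = m := by omega
      exact ⟨a, by simp, this⟩

private lemma pow_apply_pos (X : SimpleGraph V) [DecidableRel X.Adj] (hconn : X.Connected)
    (u w : V) : 0 < (X.adjMatrix ℝ ^ (X.dist u w)) w u := by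
  rw [SimpleGraph.adjMatrix_pow_apply_eq_card_walk]
  obtain ⟨p, hp⟩ := (hconn.preconnected w u).exists_walk_length_eq_dist
  have hne : Nonempty {p : X.Walk w u | p.length = X.dist u w} :=
    ⟨⟨p, by rw [Set.mem_setOf_eq, hp, SimpleGraph.dist_comm]⟩⟩
  exact_mod_cast Fintype.card_pos_iff.mpr hne

private lemma pow_apply_zero (X : SimpleGraph V) [DecidableRel X.Adj]
    (u w : V) (k : ℕ) (h : k < X.dist u w) : (X.adjMatrix ℝ ^ k) w u = 0 := by
  rw [SimpleGraph.adjMatrix_pow_apply_eq_card_walk]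
  have hemp : IsEmpty {p : X.Walk w u | p.length = k} := by
    constructor
    rintro ⟨p, hp⟩
    have hd : X.dist w u ≤ p.length := SimpleGraph.dist_le p
    rw [Set.mem_setOf_eq] at hp
    rw [SimpleGraph.dist_comm] at hd
    omega
  rw [Fintype.card_eq_zero_iff.mpr hemp]
  norm_num

/-- In a 2-connected graph, a spectrally extremal vertex `u` and a vertex
`v ≠ u` strongly cospectral to it are at maximal distance: `d(u,v) = ε_u`. -/
theorem stmt_9 (X : SimpleGraph V) [DecidableRel X.Adj] (hconn : X.Connected)
    {d : ℕ} (θ : Fin (d + 1) → ℝ) (E : Fin (d + 1) → Matrix V V ℝ)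
    (hspec : SpectralDecomp X d θ E) (u v : V)
    (hcard : 3 ≤ Fintype.card V)
    (h2conn : ∀ w : V, (X.induce {z : V | z ≠ w}).Connected)
    (hext : SpectrallyExtremal X E u) (hsc : StronglyCospectral E u v) (hne : u ≠ v) :
    X.dist u v = ecc X u := by
  classical
  -- θ is injective
  have hθinj : Function.Injective θ := by
    intro r s h
    rcases lt_trichotomy r s with hlt | heq | hlt
    · exact absurd h (ne_of_gt (hspec.strict_anti r s hlt))
    · exact heq
    · exact absurd h.symm (ne_of_gt (hspec.strict_anti s r hlt))
  have hmem : ∀ r, r ∈ suppIdx E u ↔ E r *ᵥ eVec u ≠ 0 := by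
    intro r; simp [suppIdx]
  -- the projections sum to the identity applied to e_u
  have hsum_u : ∑ r, E r *ᵥ eVec u = eVec u := by
    rw [← sum_mulVec', hspec.sum_eq_one, Matrix.one_mulVec]
  have hΦne : (suppIdx E u).Nonempty := by
    have hex : ∃ r, E r *ᵥ eVec u ≠ 0 := by
      by_contra hall
      push_neg at hall
      rw [Finset.sum_eq_zero (fun r _ => hall r)] at hsum_u
      have := congrFun hsum_u u
      simp [eVec] at this
    obtain ⟨r, hr⟩ := hex
    exact ⟨r, (hmem r).mpr hr⟩
  have hcardΦ : (suppIdx E u).card = ecc X u + 1 := by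
    have h1 : 1 ≤ (suppIdx E u).card := Finset.card_pos.mpr hΦne
    have h2 : ecc X u = dualDeg E u := hext
    unfold dualDeg at h2
    omega
  -- signs from strong cospectrality
  set σ : Fin (d + 1) → ℝ := fun r => if E r *ᵥ eVec v = E r *ᵥ eVec u then 1 else -1 with hσ
  have hσ_spec : ∀ r, E r *ᵥ eVec v = σ r • (E r *ᵥ eVec u) := by
    intro r
    show E r *ᵥ eVec v =
      (if E r *ᵥ eVec v = E r *ᵥ eVec u then (1 : ℝ) else -1) • (E r *ᵥ eVec u)
    by_cases heq : E r *ᵥ eVec v = E r *ᵥ eVec u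
    · rw [if_pos heq, one_smul]; exact heq
    · rcases hsc r with h | h
      · exact absurd h heq
      · rw [if_neg heq, neg_one_smul]; exact h
  -- the interpolation polynomial
  set p : ℝ[X] := Lagrange.interpolate (suppIdx E u) θ σ with hpdef
  have hInj : Set.InjOn θ (suppIdx E u) := hθinj.injOn
  have hdeg : p.natDegree ≤ ecc X u := by
    by_cases hp0 : p = 0
    · simp [hp0]
    · have h1 := Lagrange.degree_interpolate_lt σ hInj
      rw [hcardΦ] at h1
      have h2 := (Polynomial.natDegree_lt_iff_degree_lt hp0).mpr h1
      omega
  -- the key identity p(A) e_u = e_v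
  have hkey : (Polynomial.aeval (X.adjMatrix ℝ) p) *ᵥ eVec u = eVec v := by
    rw [aeval_decomp X hspec p, sum_mulVec']
    have hterm : ∀ r ∈ Finset.univ, (p.eval (θ r) • E r) *ᵥ eVec u = E r *ᵥ eVec v := by
      intro r _
      rw [Matrix.smul_mulVec, hσ_spec r]
      by_cases hr : r ∈ suppIdx E u
      · rw [Lagrange.eval_interpolate_at_node σ hInj hr]
      · have h0 : E r *ᵥ eVec u = 0 := not_not.mp (fun h => hr ((hmem r).mpr h))
        rw [h0, smul_zero, smul_zero]
    rw [Finset.sum_congr rfl hterm, ← sum_mulVec', hspec.sum_eq_one, Matrix.one_mulVec]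
  -- entrywise formula
  have hentry : ∀ w : V, eVec v w =
      ∑ k ∈ Finset.range (p.natDegree + 1), p.coeff k * (X.adjMatrix ℝ ^ k) w u := by
    intro w
    rw [← hkey, Polynomial.aeval_eq_sum_range, sum_mulVec', Finset.sum_apply]
    refine Finset.sum_congr rfl fun k _ => ?_
    rw [Matrix.smul_mulVec]
    simp [eVec, smul_eq_mul]
  have hp0 : p ≠ 0 := by
    intro h
    have h1 := hentry v
    rw [h] at h1
    simp [eVec] at h1
  -- Claim A : dist u v ≤ natDegree p
  have hduv : X.dist u v ≤ p.natDegree := by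
    by_contra hlt
    push_neg at hlt
    have h1 := hentry v
    rw [Finset.sum_eq_zero (fun k hk => ?_)] at h1
    · simp [eVec] at h1
    · rw [pow_apply_zero X u v k ?_, mul_zero]
      rw [Finset.mem_range] at hk
      omega
  -- Claim B : any vertex at distance natDegree p from u equals v
  have hclaimB : ∀ w : V, X.dist u w = p.natDegree → w = v := by
    intro w hw
    by_contra hwv
    have h2 := hentry w
    have h3 : eVec v w = 0 := by simp [eVec, Pi.single_eq_of_ne hwv]
    rw [h3, Finset.sum_range_succ,
      Finset.sum_eq_zero (fun k hk => by
        rw [pow_apply_zero X u w k (by rw [Finset.mem_range] at hk; omega), mul_zero]),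
      zero_add] at h2
    have hpos := pow_apply_pos X hconn u w
    rw [hw] at hpos
    have hlc : p.leadingCoeff ≠ 0 := Polynomial.leadingCoeff_ne_zero.mpr hp0
    rw [Polynomial.leadingCoeff] at hlc
    exact mul_ne_zero hlc (ne_of_gt hpos) h2.symm
  -- the eccentricity is attained
  obtain ⟨z, _, hz⟩ := Finset.exists_mem_eq_sup Finset.univ
    ⟨u, Finset.mem_univ u⟩ (fun w => X.dist u w)
  have hz2 : ecc X u = X.dist u z := hz
  rcases lt_or_eq_of_le hdeg with hm | hm
  · -- natDegree p < ecc X u : contradiction with 2-connectivity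
    exfalso
    have hzv : z ≠ v := by
      intro h
      rw [h] at hz2
      omega
    obtain ⟨W⟩ := (h2conn v).preconnected ⟨u, hne⟩ ⟨z, hzv⟩
    obtain ⟨w, hw_mem, hw_dist⟩ := ivt_walk X hconn u p.natDegree
      (W.map (SimpleGraph.Embedding.induce {z : V | z ≠ v}).toHom)
      (by show X.dist u u ≤ p.natDegree; simp [SimpleGraph.dist_self])
      (by show p.natDegree ≤ X.dist u z; omega)
    have hwv := hclaimB w hw_dist
    rw [SimpleGraph.Walk.support_map] at hw_mem
    obtain ⟨w', _, rfl⟩ := List.mem_map.mp hw_mem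
    exact w'.2 hwv
  · -- natDegree p = ecc X u : z = v
    have hzd : X.dist u z = p.natDegree := by rw [← hz2]; exact hm.symm
    have hzv := hclaimB z hzd
    rw [← hzv]
    exact hz2.symm
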